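/- For all integers s ≥ 1 and d ≥ 2, the exponential bound ť_s^{(d)} ≤ (3/4)^{d−2} · t_{s−1} holds. -/

import Mathlib

/-- `t_k = (2k)!/(k!(k+1)!)`, the `k`-th Catalan number, as a real number. -/
noncomputable def tReal (k : ℕ) : ℝ :=
  (Nat.factorial (2 * k) : ℝ) / ((Nat.factorial k : ℝ) * (Nat.factorial (k + 1) : ℝ))

/-- `ť_s^{(d)} = Σ_{l₁+⋯+l_d = s−d} t_{l₁}⋯t_{l_d}`, the number of plane rooted trees with
`s` edges whose root has exit degree `d`; it is `0` when `d = 0` or `d > s`. -/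
noncomputable def tcheck (s d : ℕ) : ℝ :=
  if d = 0 ∨ s < d then 0
  else ∑ l ∈ Finset.Nat.antidiagonalTuple d (s - d), ∏ i, tReal (l i)

open Finset PowerSeries

lemma tReal_eq_catalan (k : ℕ) : tReal k = (catalan k : ℝ) := by
  have h1 : (k + 1) * catalan k = k.centralBinom := succ_mul_catalan_eq_centralBinom k
  have h2 : k.centralBinom * k.factorial * k.factorial = (2 * k).factorial := by
    have := Nat.choose_mul_factorial_mul_factorial (show k ≤ 2 * k by omega)
    simpa [Nat.centralBinom, show 2 * k - k = k by omega] using this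
  have h1' : ((k : ℝ) + 1) * catalan k = k.centralBinom := by exact_mod_cast h1
  have h2' : (k.centralBinom : ℝ) * k.factorial * k.factorial = (2 * k).factorial := by
    exact_mod_cast h2
  have hf : (0 : ℝ) < k.factorial := by exact_mod_cast k.factorial_pos
  unfold tReal
  rw [Nat.factorial_succ]
  push_cast
  rw [← h2', ← h1']
  field_simp

lemma tReal_pos (k : ℕ) : 0 < tReal k := by
  unfold tReal
  apply div_pos
  · exact_mod_cast Nat.factorial_pos _
  · have := Nat.factorial_pos k
    have := Nat.factorial_pos (k + 1)
    positivity

lemma tReal_zero : tReal 0 = 1 := by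
  unfold tReal; norm_num [Nat.factorial]

lemma tReal_succ (n : ℕ) :
    tReal (n + 1) = ∑ ij ∈ Finset.HasAntidiagonal.antidiagonal n, tReal ij.1 * tReal ij.2 := by
  simp_rw [tReal_eq_catalan]
  exact_mod_cast congrArg (Nat.cast : ℕ → ℝ) (catalan_succ' n)

lemma tReal_succ_le (n : ℕ) : tReal (n + 1) ≤ 4 * tReal n := by
  have h1 := Nat.succ_mul_centralBinom_succ n
  have h2 := succ_mul_catalan_eq_centralBinom n
  have h3 := succ_mul_catalan_eq_centralBinom (n + 1)
  have h1' : ((n : ℝ) + 1) * Nat.centralBinom (n + 1) =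
      2 * (2 * n + 1) * Nat.centralBinom n := by exact_mod_cast h1
  have h2' : ((n : ℝ) + 1) * catalan n = Nat.centralBinom n := by exact_mod_cast h2
  have h3' : ((n : ℝ) + 1 + 1) * catalan (n + 1) = Nat.centralBinom (n + 1) := by
    exact_mod_cast h3
  have key : ((n : ℝ) + 2) * catalan (n + 1) = 2 * (2 * n + 1) * catalan n := by
    have hne : ((n : ℝ) + 1) ≠ 0 := by positivity
    apply mul_left_cancel₀ hne
    linear_combination h1' + ((n : ℝ) + 1) * h3' - 2 * (2 * (n : ℝ) + 1) * h2'
  rw [tReal_eq_catalan, tReal_eq_catalan]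
  have hc : (0 : ℝ) ≤ catalan n := by positivity
  nlinarith [key, hc]

noncomputable def Cps : PowerSeries ℝ := PowerSeries.mk tReal

lemma coeff_mk_pow (f : ℕ → ℝ) (d : ℕ) : ∀ n : ℕ,
    (PowerSeries.coeff n) ((PowerSeries.mk f) ^ d) =
      ∑ l ∈ Finset.Nat.antidiagonalTuple d n, ∏ i, f (l i) := by
  induction d with
  | zero =>
    intro n
    rw [pow_zero]
    cases n with
    | zero => simp [Finset.Nat.antidiagonalTuple_zero_zero]
    | succ n => simp [Finset.Nat.antidiagonalTuple_zero_succ]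
  | succ d ih =>
    intro n
    rw [pow_succ', PowerSeries.coeff_mul]
    simp_rw [PowerSeries.coeff_mk, ih, Finset.mul_sum]
    rw [Finset.sum_sigma']
    refine (Finset.sum_bij'
      (fun (l : Fin (d + 1) → ℕ) _ =>
        (⟨(l 0, ∑ i : Fin d, l i.succ), Fin.tail l⟩ : (_ : ℕ × ℕ) × (Fin d → ℕ)))
      (fun (x : (_ : ℕ × ℕ) × (Fin d → ℕ)) _ => (Fin.cons x.1.1 x.2 : Fin (d + 1) → ℕ))
      ?_ ?_ ?_ ?_ ?_).symm
    · intro l hl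
      simp only [Finset.Nat.mem_antidiagonalTuple, Finset.mem_sigma,
        Finset.HasAntidiagonal.mem_antidiagonal] at hl ⊢
      constructor
      · rw [← hl, Fin.sum_univ_succ]
      · rfl
    · intro x hx
      simp only [Finset.mem_sigma, Finset.HasAntidiagonal.mem_antidiagonal,
        Finset.Nat.mem_antidiagonalTuple] at hx ⊢
      rw [Fin.sum_cons, hx.2, hx.1]
    · intro l hl
      exact Fin.cons_self_tail l
    · intro x hx
      simp only [Finset.mem_sigma, Finset.HasAntidiagonal.mem_antidiagonal,
        Finset.Nat.mem_antidiagonalTuple] at hx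
      obtain ⟨⟨a, b⟩, m⟩ := x
      have hb : ∑ i : Fin d, m i = b := hx.2
      simp [Fin.cons_succ, Fin.tail_cons, hb]
    · intro l hl
      rw [Fin.prod_univ_succ]
      simp [Fin.cons_zero, Fin.cons_succ, Fin.tail]

lemma key_bound (e : ℕ) : ∀ m : ℕ,
    PowerSeries.coeff m (Cps ^ (e + 2)) ≤ (3 / 4 : ℝ) ^ e * tReal (m + e + 1) := by
  induction e with
  | zero =>
    intro m
    rw [show Cps ^ 2 = Cps * Cps by ring, PowerSeries.coeff_mul]
    simp only [Cps, PowerSeries.coeff_mk, pow_zero, one_mul]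
    rw [tReal_succ m]
  | succ e ih =>
    intro m
    rw [show e + 1 + 2 = (e + 2) + 1 by ring, pow_succ', PowerSeries.coeff_mul]
    simp only [Cps, PowerSeries.coeff_mk]
    have step1 : ∑ p ∈ Finset.HasAntidiagonal.antidiagonal m,
        tReal p.1 * (PowerSeries.coeff p.2) (PowerSeries.mk tReal ^ (e + 2)) ≤
        ∑ p ∈ Finset.HasAntidiagonal.antidiagonal m,
        tReal p.1 * ((3 / 4 : ℝ) ^ e * tReal (p.2 + e + 1)) := by
      apply Finset.sum_le_sum
      intro p _
      exact mul_le_mul_of_nonneg_left (ih p.2) (tReal_pos p.1).le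
    refine step1.trans ?_
    have hrw : ∑ p ∈ Finset.HasAntidiagonal.antidiagonal m,
        tReal p.1 * ((3 / 4 : ℝ) ^ e * tReal (p.2 + e + 1)) =
        (3 / 4 : ℝ) ^ e * ∑ k ∈ Finset.range (m + 1), tReal k * tReal (m + e + 1 - k) := by
      rw [Finset.mul_sum, Finset.Nat.sum_antidiagonal_eq_sum_range_succ_mk]
      apply Finset.sum_congr rfl
      intro k hk
      rw [Finset.mem_range] at hk
      rw [show m - k + e + 1 = m + e + 1 - k by omega]
      ring
    rw [hrw]
    have hfull : tReal (m + e + 2) =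
        ∑ k ∈ Finset.range (m + e + 2), tReal k * tReal (m + e + 1 - k) := by
      rw [tReal_succ (m + e + 1), Finset.Nat.sum_antidiagonal_eq_sum_range_succ_mk]
    have hsub : ∑ k ∈ Finset.range (m + 1), tReal k * tReal (m + e + 1 - k) ≤
        ∑ k ∈ Finset.range (m + e + 1), tReal k * tReal (m + e + 1 - k) := by
      apply Finset.sum_le_sum_of_subset_of_nonneg
      · exact Finset.range_subset_range.mpr (by omega)
      · intro i _ _
        exact (mul_pos (tReal_pos i) (tReal_pos _)).le
    have hsplit : ∑ k ∈ Finset.range (m + e + 2), tReal k * tReal (m + e + 1 - k) =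
        (∑ k ∈ Finset.range (m + e + 1), tReal k * tReal (m + e + 1 - k)) +
        tReal (m + e + 1) := by
      rw [Finset.sum_range_succ]
      simp [tReal_zero]
    have hratio : tReal (m + e + 2) ≤ 4 * tReal (m + e + 1) := tReal_succ_le (m + e + 1)
    have hS : ∑ k ∈ Finset.range (m + 1), tReal k * tReal (m + e + 1 - k) ≤
        (3 / 4 : ℝ) * tReal (m + e + 2) := by
      have := hfull
      linarith [hsub, hsplit, hratio]
    calc (3 / 4 : ℝ) ^ e * ∑ k ∈ Finset.range (m + 1), tReal k * tReal (m + e + 1 - k)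
        ≤ (3 / 4 : ℝ) ^ e * ((3 / 4 : ℝ) * tReal (m + e + 2)) := by
          apply mul_le_mul_of_nonneg_left hS (by positivity)
      _ = (3 / 4 : ℝ) ^ (e + 1) * tReal (m + (e + 1) + 1) := by
          rw [pow_succ, show m + (e + 1) + 1 = m + e + 2 by omega]; ring

/-- For all `s ≥ 1` and `d ≥ 2`, `ť_s^{(d)} ≤ (3/4)^{d−2} · t_{s−1}`. -/
theorem tcheck_exponential_bound (s d : ℕ) (hs : 1 ≤ s) (hd : 2 ≤ d) :
    tcheck s d ≤ (3 / 4 : ℝ) ^ (d - 2) * tReal (s - 1) := by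
  by_cases hsd : s < d
  · rw [tcheck, if_pos (Or.inr hsd)]
    exact mul_nonneg (by positivity) (tReal_pos _).le
  · push_neg at hsd
    have heq : tcheck s d = PowerSeries.coeff (s - d) (Cps ^ d) := by
      rw [tcheck, if_neg (by omega)]
      exact (coeff_mk_pow tReal d (s - d)).symm
    have hkey := key_bound (d - 2) (s - d)
    rw [show d - 2 + 2 = d by omega, show s - d + (d - 2) + 1 = s - 1 by omega] at hkey
    rw [heq]
    exact hkey
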